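/- Assume the SETUP with the f_i of class C², conditions G1–G3, H1–H5, and the distortion condition D2, and use the SYMBOLIC CODING. Then there exists a constant C > 0 such that for every index i and all bi-infinite index sequences ω, ω' with ω₀ = ω'₀ = i (so that z(ω), z(ω') ∈ E_i ∩ Λ), one has |log D^uF(z(ω)) − log D^uF(z(ω'))| ≤ C; equivalently, the variation of log D^uF over E_i ∩ Λ is bounded uniformly in i, and the ratios D^uf_i(z₁)/D^uf_i(z₂) are bounded by a constant c independent of i. -/

import Mathlib

open MeasureTheory Set Filter Topology

noncomputable section

/-- The unit square `Q = [0,1] × [0,1]`. -/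
def Q2 : Set (ℝ × ℝ) := Set.Icc (0:ℝ) 1 ×ˢ Set.Icc (0:ℝ) 1

/-- The full-height curvilinear rectangle `E_i` with left/right boundaries `l i`, `r i`. -/
def Erect (l r : ℕ → ℝ → ℝ) (i : ℕ) : Set (ℝ × ℝ) :=
  {p : ℝ × ℝ | p.2 ∈ Set.Icc (0:ℝ) 1 ∧ l i p.2 ≤ p.1 ∧ p.1 ≤ r i p.2}

/-- The full-width strip `S_i` with bottom/top boundaries `b i`, `t i`. -/
def Sstrip (b t : ℕ → ℝ → ℝ) (i : ℕ) : Set (ℝ × ℝ) :=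
  {p : ℝ × ℝ | p.1 ∈ Set.Icc (0:ℝ) 1 ∧ b i p.1 ≤ p.2 ∧ p.2 ≤ t i p.1}

/-- The map `f_i = (f_{i1}, f_{i2})` as a map `ℝ² → ℝ²`. -/
def fv (f1 f2 : ℕ → ℝ × ℝ → ℝ) (i : ℕ) (p : ℝ × ℝ) : ℝ × ℝ := (f1 i p, f2 i p)

/-- Partial derivative in the `x`-direction. -/
def Dx (g : ℝ × ℝ → ℝ) (z : ℝ × ℝ) : ℝ := deriv (fun s => g (s, z.2)) z.1

/-- Partial derivative in the `y`-direction. -/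
def Dy (g : ℝ × ℝ → ℝ) (z : ℝ × ℝ) : ℝ := deriv (fun s => g (z.1, s)) z.2

/-- Absolute value of the Jacobian determinant of `f_i`. -/
def Jac (f1 f2 : ℕ → ℝ × ℝ → ℝ) (i : ℕ) (z : ℝ × ℝ) : ℝ :=
  |Dx (f1 i) z * Dy (f2 i) z - Dy (f1 i) z * Dx (f2 i) z|

/-- Maximum of the absolute values of the second-order partial derivatives of `f_i`. -/
def D2max (f1 f2 : ℕ → ℝ × ℝ → ℝ) (i : ℕ) (z : ℝ × ℝ) : ℝ :=
  max (max (max |Dx (Dx (f1 i)) z| |Dy (Dx (f1 i)) z|)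
           (max |Dy (Dy (f1 i)) z| |Dx (Dx (f2 i)) z|))
      (max |Dy (Dx (f2 i)) z| |Dy (Dy (f2 i)) z|)

/-- `δ_{i,max}`: maximal width of a horizontal cross-section of `E_i`. -/
def deltaMax (l r : ℕ → ℝ → ℝ) (i : ℕ) : ℝ :=
  sSup ((fun y => r i y - l i y) '' Set.Icc (0:ℝ) 1)

/-- `δ_{i,min}`: minimal width of a horizontal cross-section of `E_i`. -/
def deltaMin (l r : ℕ → ℝ → ℝ) (i : ℕ) : ℝ :=
  sInf ((fun y => r i y - l i y) '' Set.Icc (0:ℝ) 1)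

/-- `E_{i₀ … i_{n-1}} = E_{i₀} ∩ f_{i₀}⁻¹ (E_{i₁ … i_{n-1}})`. -/
def Efin (l r : ℕ → ℝ → ℝ) (f1 f2 : ℕ → ℝ × ℝ → ℝ) : (ℕ → ℕ) → ℕ → Set (ℝ × ℝ)
  | _, 0 => Set.univ
  | idx, n + 1 =>
      Erect l r (idx 0) ∩ fv f1 f2 (idx 0) ⁻¹' Efin l r f1 f2 (fun k => idx (k + 1)) n

/-- `S_{i₋ₘ … i₋₁} = f_{i₋₁} (S_{i₋ₘ … i₋₂} ∩ E_{i₋₁})`; here `j 0 = i₋₁`, `j 1 = i₋₂`, …. -/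
def Sfin (l r : ℕ → ℝ → ℝ) (f1 f2 : ℕ → ℝ × ℝ → ℝ) : (ℕ → ℕ) → ℕ → Set (ℝ × ℝ)
  | _, 0 => Set.univ
  | j, m + 1 =>
      fv f1 f2 (j 0) '' (Sfin l r f1 f2 (fun k => j (k + 1)) m ∩ Erect l r (j 0))

/-- The topological attractor `Λ`, the union of all the unstable curves. -/
def Attractor (l r : ℕ → ℝ → ℝ) (f1 f2 : ℕ → ℝ × ℝ → ℝ) : Set (ℝ × ℝ) :=
  ⋃ j : ℕ → ℕ, ⋂ m : ℕ, Sfin l r f1 f2 j (m + 1)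

/-- The slope `a_z` of the unstable direction at the point `z(ω)` coded by `ω`,
where `yu ω` is the unstable curve of `ω` and `zp ω` is the point coded by `ω`. -/
def uSlope (yu : (ℤ → ℕ) → ℝ → ℝ) (zp : (ℤ → ℕ) → ℝ × ℝ) (ω : ℤ → ℕ) : ℝ :=
  derivWithin (yu ω) (Set.Icc (0:ℝ) 1) (zp ω).1

/-- The derivative of `F` in the unstable direction at the point `z(ω)`:
`D^uF(z(ω)) = |F_{1x}(z(ω)) + a_{z(ω)} F_{1y}(z(ω))|` with `F = f_{ω₀}`. -/
def DuF (f1 : ℕ → ℝ × ℝ → ℝ) (yu : (ℤ → ℕ) → ℝ → ℝ) (zp : (ℤ → ℕ) → ℝ × ℝ)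
    (ω : ℤ → ℕ) : ℝ :=
  |Dx (f1 (ω 0)) (zp ω) + uSlope yu zp ω * Dy (f1 (ω 0)) (zp ω)|

lemma Dx_eq_fderiv' {g : ℝ × ℝ → ℝ} {z : ℝ × ℝ} (hg : DifferentiableAt ℝ g z) :
    Dx g z = fderiv ℝ g z (1, 0) := by
  have h1 : HasDerivAt (fun s : ℝ => (s, z.2)) ((1 : ℝ), (0 : ℝ)) z.1 :=
    (hasDerivAt_id z.1).prodMk (hasDerivAt_const z.1 z.2)
  have h2 : HasDerivAt (fun s : ℝ => g (s, z.2)) (fderiv ℝ g z (1, 0)) z.1 :=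
    hg.hasFDerivAt.comp_hasDerivAt z.1 h1
  exact h2.deriv

lemma Dy_eq_fderiv' {g : ℝ × ℝ → ℝ} {z : ℝ × ℝ} (hg : DifferentiableAt ℝ g z) :
    Dy g z = fderiv ℝ g z (0, 1) := by
  have h1 : HasDerivAt (fun s : ℝ => (z.1, s)) ((0 : ℝ), (1 : ℝ)) z.2 :=
    (hasDerivAt_const z.2 z.1).prodMk (hasDerivAt_id z.2)
  have h2 : HasDerivAt (fun s : ℝ => g (z.1, s)) (fderiv ℝ g z (0, 1)) z.2 :=
    hg.hasFDerivAt.comp_hasDerivAt z.2 h1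
  exact h2.deriv

lemma clm_decomp' (L : ℝ × ℝ →L[ℝ] ℝ) (v : ℝ × ℝ) :
    L v = v.1 * L (1, 0) + v.2 * L (0, 1) := by
  have hv : v = v.1 • ((1 : ℝ), (0 : ℝ)) + v.2 • ((0 : ℝ), (1 : ℝ)) := by
    simp [Prod.ext_iff]
  rw [hv, L.map_add, L.map_smul, L.map_smul]
  simp [smul_eq_mul]

lemma log_Dx_path_bound (C₀ L : ℝ) (f : ℝ × ℝ → ℝ) (hf : ContDiff ℝ 2 f)
    (E : Set (ℝ × ℝ))
    (hbd1 : ∀ z ∈ E, |Dx (Dx f) z| ≤ C₀ * |Dx f z|)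
    (hbd2 : ∀ z ∈ E, |Dy (Dx f) z| ≤ C₀ * |Dx f z|)
    (hC₀ : 0 < C₀)
    (hne : ∀ z ∈ E, Dx f z ≠ 0)
    (γ γ' : ℝ → ℝ × ℝ)
    (hγ : ∀ s ∈ Set.Icc (0:ℝ) 1, HasDerivAt γ (γ' s) s)
    (hmem : ∀ s ∈ Set.Icc (0:ℝ) 1, γ s ∈ E)
    (hL : ∀ s ∈ Set.Icc (0:ℝ) 1, |(γ' s).1| + |(γ' s).2| ≤ L) :
    abs (Real.log |Dx f (γ 1)| - Real.log |Dx f (γ 0)|) ≤ C₀ * L := by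
  have hfd : Differentiable ℝ f := hf.differentiable (by norm_num)
  set w : ℝ × ℝ → ℝ := fun z => fderiv ℝ f z (1, 0) with hwdef
  have hweq : Dx f = w := funext fun z => Dx_eq_fderiv' (hfd z)
  have hwC1 : ContDiff ℝ 1 w := (hf.fderiv_right (by norm_num)).clm_apply contDiff_const
  have hwd : Differentiable ℝ w := hwC1.differentiable one_ne_zero
  set u : ℝ → ℝ := fun s => w (γ s) with hudef
  set u' : ℝ → ℝ := fun s => fderiv ℝ w (γ s) (γ' s) with hu'def
  have hu : ∀ s ∈ Set.Icc (0:ℝ) 1, HasDerivAt u (u' s) s := fun s hs =>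
    (hwd (γ s)).hasFDerivAt.comp_hasDerivAt s (hγ s hs)
  have hune : ∀ s ∈ Set.Icc (0:ℝ) 1, u s ≠ 0 := by
    intro s hs
    have := hne _ (hmem s hs); rwa [hweq] at this
  have hub : ∀ s ∈ Set.Icc (0:ℝ) 1, |u' s| ≤ C₀ * L * |u s| := by
    intro s hs
    have hz := hmem s hs
    have hdec := clm_decomp' (fderiv ℝ w (γ s)) (γ' s)
    have e1 : fderiv ℝ w (γ s) (1, 0) = Dx w (γ s) := (Dx_eq_fderiv' (hwd (γ s))).symm
    have e2 : fderiv ℝ w (γ s) (0, 1) = Dy w (γ s) := (Dy_eq_fderiv' (hwd (γ s))).symm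
    have b1 : |Dx w (γ s)| ≤ C₀ * |u s| := by
      have := hbd1 _ hz; rwa [hweq] at this
    have b2 : |Dy w (γ s)| ≤ C₀ * |u s| := by
      have := hbd2 _ hz; rwa [hweq] at this
    have hLs := hL s hs
    have : |u' s| = |(γ' s).1 * Dx w (γ s) + (γ' s).2 * Dy w (γ s)| := by
      show |(fderiv ℝ w (γ s)) (γ' s)| = _
      rw [hdec, e1, e2]
    rw [this]
    calc |(γ' s).1 * Dx w (γ s) + (γ' s).2 * Dy w (γ s)|
        ≤ |(γ' s).1 * Dx w (γ s)| + |(γ' s).2 * Dy w (γ s)| := abs_add_le _ _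
      _ = |(γ' s).1| * |Dx w (γ s)| + |(γ' s).2| * |Dy w (γ s)| := by
          rw [abs_mul, abs_mul]
      _ ≤ (|(γ' s).1| + |(γ' s).2|) * (C₀ * |u s|) := by
          nlinarith [abs_nonneg (γ' s).1, abs_nonneg (γ' s).2, abs_nonneg (Dx w (γ s)),
            abs_nonneg (Dy w (γ s)), mul_nonneg hC₀.le (abs_nonneg (u s))]
      _ ≤ L * (C₀ * |u s|) := by
          have : (0:ℝ) ≤ C₀ * |u s| := mul_nonneg hC₀.le (abs_nonneg _)
          nlinarith
      _ = C₀ * L * |u s| := by ring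
  set φ : ℝ → ℝ := fun s => Real.log (u s) with hφdef
  have hφ : ∀ s ∈ Set.Icc (0:ℝ) 1, HasDerivWithinAt φ ((u s)⁻¹ * u' s) (Set.Icc (0:ℝ) 1) s :=
    fun s hs => ((Real.hasDerivAt_log (hune s hs)).comp s (hu s hs)).hasDerivWithinAt
  have hφb : ∀ s ∈ Set.Icc (0:ℝ) 1, ‖(u s)⁻¹ * u' s‖ ≤ C₀ * L := by
    intro s hs
    rw [Real.norm_eq_abs, abs_mul, abs_inv]
    have h1 := hub s hs
    have h2 : 0 < |u s| := abs_pos.mpr (hune s hs)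
    rw [← div_eq_inv_mul, div_le_iff₀ h2]
    linarith
  have key := Convex.norm_image_sub_le_of_norm_hasDerivWithin_le hφ hφb (convex_Icc 0 1)
      (Set.left_mem_Icc.mpr zero_le_one) (Set.right_mem_Icc.mpr zero_le_one)
  have e0 : Real.log |Dx f (γ 0)| = φ 0 := by rw [hweq]; exact Real.log_abs _
  have e1 : Real.log |Dx f (γ 1)| = φ 1 := by rw [hweq]; exact Real.log_abs _
  rw [e0, e1]
  simpa using key

lemma dist_log_Dx
    (α K₀ C₀ : ℝ) (hα0 : 0 < α) (hα1 : α < 1) (hK : 1 < K₀) (hC₀ : 0 < C₀)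
    (l r : ℕ → ℝ → ℝ) (f1 f2 : ℕ → ℝ × ℝ → ℝ) (i : ℕ)
    (hl : ContDiff ℝ 1 (l i)) (hr : ContDiff ℝ 1 (r i))
    (hl' : ∀ y, |deriv (l i) y| ≤ α) (hr' : ∀ y, |deriv (r i) y| ≤ α)
    (hlr : ∀ y ∈ Set.Icc (0:ℝ) 1, l i y < r i y)
    (hEQ : Erect l r i ⊆ Q2)
    (hfsm : ContDiff ℝ 2 (fv f1 f2 i))
    (hH2 : ∀ z ∈ Erect l r i, K₀ ≤ |Dx (f1 i) z| - α * |Dy (f1 i) z|)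
    (hD2 : ∀ z ∈ Erect l r i, D2max f1 f2 i z ≤ C₀ * |Dx (f1 i) z|)
    {z1 z2 : ℝ × ℝ} (hz1 : z1 ∈ Erect l r i) (hz2 : z2 ∈ Erect l r i) :
    Real.log |Dx (f1 i) z1| - Real.log |Dx (f1 i) z2| ≤ 3 * C₀ := by
  have hf : ContDiff ℝ 2 (f1 i) := hfsm.fst
  have hbd1 : ∀ z ∈ Erect l r i, |Dx (Dx (f1 i)) z| ≤ C₀ * |Dx (f1 i) z| := by
    intro z hz
    refine le_trans ?_ (hD2 z hz)
    unfold D2max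
    exact le_max_of_le_left (le_max_of_le_left (le_max_left _ _))
  have hbd2 : ∀ z ∈ Erect l r i, |Dy (Dx (f1 i)) z| ≤ C₀ * |Dx (f1 i) z| := by
    intro z hz
    refine le_trans ?_ (hD2 z hz)
    unfold D2max
    exact le_max_of_le_left (le_max_of_le_left (le_max_right _ _))
  have hne : ∀ z ∈ Erect l r i, Dx (f1 i) z ≠ 0 := by
    intro z hz
    have h2 := hH2 z hz
    have : 0 < |Dx (f1 i) z| := by
      nlinarith [abs_nonneg (Dy (f1 i) z), mul_nonneg hα0.le (abs_nonneg (Dy (f1 i) z))]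
    exact abs_pos.mp this
  obtain ⟨hy1, hl1, hr1⟩ := hz1
  obtain ⟨hy2, hl2, hr2⟩ := hz2
  have hden : 0 < r i z1.2 - l i z1.2 := sub_pos.mpr (hlr _ hy1)
  set θ : ℝ := (z1.1 - l i z1.2) / (r i z1.2 - l i z1.2) with hθdef
  have hθ0 : 0 ≤ θ := div_nonneg (by linarith) hden.le
  have hθ1 : θ ≤ 1 := (div_le_one hden).mpr (by linarith)
  set c : ℝ → ℝ := fun y => l i y + θ * (r i y - l i y) with hcdef
  have hc1 : c z1.2 = z1.1 := by
    have h := div_mul_cancel₀ (z1.1 - l i z1.2) hden.ne'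
    simp only [hcdef, hθdef]
    linarith [h]
  have hcmem : ∀ y ∈ Set.Icc (0:ℝ) 1, (c y, y) ∈ Erect l r i := by
    intro y hy
    refine ⟨hy, ?_, ?_⟩ <;> simp only [hcdef] <;>
      nlinarith [hlr y hy, mul_nonneg hθ0 (le_of_lt (sub_pos.mpr (hlr y hy)))]
  have hcd : ∀ y, HasDerivAt c (deriv (l i) y + θ * (deriv (r i) y - deriv (l i) y)) y := by
    intro y
    have hld : HasDerivAt (l i) (deriv (l i) y) y := (hl.differentiable one_ne_zero y).hasDerivAt
    have hrd : HasDerivAt (r i) (deriv (r i) y) y := (hr.differentiable one_ne_zero y).hasDerivAt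
    exact hld.add ((hrd.sub hld).const_mul θ)
  have hcd_bd : ∀ y, |deriv (l i) y + θ * (deriv (r i) y - deriv (l i) y)| ≤ α := by
    intro y
    have h1 := abs_le.mp (hl' y)
    have h2 := abs_le.mp (hr' y)
    rw [abs_le]
    constructor <;> nlinarith
  -- the y-coordinates are in [0,1] and z-coordinates in [0,1]
  have hQ1 : z1 ∈ Q2 := hEQ ⟨hy1, hl1, hr1⟩
  have hQ2 : z2 ∈ Q2 := hEQ ⟨hy2, hl2, hr2⟩
  have hx2 : z2.1 ∈ Set.Icc (0:ℝ) 1 := hQ2.1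
  have hQm : (c z2.2, z2.2) ∈ Q2 := hEQ (hcmem _ hy2)
  have hxm : c z2.2 ∈ Set.Icc (0:ℝ) 1 := hQm.1
  -- Piece 1 : from z1 to (c z2.2, z2.2)
  have R1 : abs (Real.log |Dx (f1 i) ((fun s => (c (z1.2 + s * (z2.2 - z1.2)), z1.2 + s * (z2.2 - z1.2))) (1:ℝ))| -
      Real.log |Dx (f1 i) ((fun s => (c (z1.2 + s * (z2.2 - z1.2)), z1.2 + s * (z2.2 - z1.2))) (0:ℝ))|) ≤ C₀ * 2 := by
    apply log_Dx_path_bound C₀ 2 (f1 i) hf (Erect l r i) hbd1 hbd2 hC₀ hne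
      (fun s => (c (z1.2 + s * (z2.2 - z1.2)), z1.2 + s * (z2.2 - z1.2))) (fun s => ((deriv (l i) (z1.2 + s * (z2.2 - z1.2)) + θ * (deriv (r i) (z1.2 + s * (z2.2 - z1.2)) - deriv (l i) (z1.2 + s * (z2.2 - z1.2)))) * (z2.2 - z1.2), z2.2 - z1.2))
    · intro s hs
      have ha : HasDerivAt (fun s : ℝ => z1.2 + s * (z2.2 - z1.2)) (z2.2 - z1.2) s := by
        simpa using (hasDerivAt_mul_const (z2.2 - z1.2)).const_add z1.2
      exact ((hcd _).comp s ha).prodMk ha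
    · intro s hs
      obtain ⟨hs0, hs1⟩ := hs
      obtain ⟨hy10, hy11⟩ := hy1
      obtain ⟨hy20, hy21⟩ := hy2
      refine hcmem _ ⟨by nlinarith, by nlinarith⟩
    · intro s hs
      obtain ⟨hy10, hy11⟩ := hy1
      obtain ⟨hy20, hy21⟩ := hy2
      have hd : |z2.2 - z1.2| ≤ 1 := by rw [abs_le]; constructor <;> linarith
      have hb := hcd_bd (z1.2 + s * (z2.2 - z1.2))
      simp only [abs_mul]
      nlinarith [abs_nonneg (deriv (l i) (z1.2 + s * (z2.2 - z1.2)) + θ * (deriv (r i) (z1.2 + s * (z2.2 - z1.2)) - deriv (l i) (z1.2 + s * (z2.2 - z1.2)))), abs_nonneg (z2.2 - z1.2)]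
  -- Piece 2 : from (c z2.2, z2.2) to z2
  have R2 : abs (Real.log |Dx (f1 i) ((fun s => (c z2.2 + s * (z2.1 - c z2.2), z2.2)) (1:ℝ))| -
      Real.log |Dx (f1 i) ((fun s => (c z2.2 + s * (z2.1 - c z2.2), z2.2)) (0:ℝ))|) ≤ C₀ * 1 := by
    apply log_Dx_path_bound C₀ 1 (f1 i) hf (Erect l r i) hbd1 hbd2 hC₀ hne
      (fun s => (c z2.2 + s * (z2.1 - c z2.2), z2.2)) (fun s => (z2.1 - c z2.2, (0:ℝ)))
    · intro s hs
      exact (by simpa using (hasDerivAt_mul_const (z2.1 - c z2.2)).const_add (c z2.2) :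
        HasDerivAt (fun s : ℝ => c z2.2 + s * (z2.1 - c z2.2)) (z2.1 - c z2.2) s).prodMk
        (hasDerivAt_const s z2.2)
    · intro s hs
      obtain ⟨hs0, hs1⟩ := hs
      have hm := hcmem z2.2 hy2
      obtain ⟨_, hml, hmr⟩ := hm
      dsimp only at hml hmr
      refine ⟨hy2, ?_, ?_⟩ <;> dsimp only <;> nlinarith [hl2, hr2]
    · intro s hs
      obtain ⟨ha0, ha1⟩ := hx2
      obtain ⟨hb0, hb1⟩ := hxm
      simp only [abs_zero, add_zero]
      rw [abs_le]; constructor <;> simp <;> linarith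
  -- combine
  have e10 : z1.2 + (0:ℝ) * (z2.2 - z1.2) = z1.2 := by ring
  have e11 : z1.2 + (1:ℝ) * (z2.2 - z1.2) = z2.2 := by ring
  have e20 : c z2.2 + (0:ℝ) * (z2.1 - c z2.2) = c z2.2 := by ring
  have e21 : c z2.2 + (1:ℝ) * (z2.1 - c z2.2) = z2.1 := by ring
  simp only [e10, e11] at R1
  simp only [e20, e21] at R2
  rw [hc1] at R1
  have hz1e : (z1.1, z1.2) = z1 := rfl
  have hz2e : (z2.1, z2.2) = z2 := rfl
  rw [hz1e] at R1
  rw [hz2e] at R2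
  have t1 := abs_sub_le (Real.log |Dx (f1 i) z1|) (Real.log |Dx (f1 i) (c z2.2, z2.2)|)
    (Real.log |Dx (f1 i) z2|)
  have u1 := le_abs_self (Real.log |Dx (f1 i) z1| - Real.log |Dx (f1 i) z2|)
  rw [abs_sub_comm] at R1
  rw [abs_sub_comm] at R2
  linarith [t1, u1, R1, R2]

/-- Corollaries 5.6 and 5.7: the variation of `log D^uF` over each `E_i ∩ Λ` is bounded
uniformly in `i`, and the ratios `D^u f_i(z₁)/D^u f_i(z₂)` are uniformly bounded. -/
theorem logDuF_bounded_variation_on_Ei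
    (α K₀ : ℝ) (hα0 : 0 < α) (hα1 : α < 1) (hK : 1 < K₀)
    (l r b t : ℕ → ℝ → ℝ) (f1 f2 : ℕ → ℝ × ℝ → ℝ)
    (hl : ∀ i, ContDiff ℝ 1 (l i)) (hr : ∀ i, ContDiff ℝ 1 (r i))
    (hb : ∀ i, ContDiff ℝ 1 (b i)) (ht : ∀ i, ContDiff ℝ 1 (t i))
    (hl' : ∀ i y, |deriv (l i) y| ≤ α) (hr' : ∀ i y, |deriv (r i) y| ≤ α)
    (hb' : ∀ i x, |deriv (b i) x| ≤ α) (ht' : ∀ i x, |deriv (t i) x| ≤ α)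
    (hlr : ∀ i, ∀ y ∈ Set.Icc (0:ℝ) 1, l i y < r i y)
    (hbt : ∀ i, ∀ x ∈ Set.Icc (0:ℝ) 1, b i x < t i x)
    (hEQ : ∀ i, Erect l r i ⊆ Q2) (hSQ : ∀ i, Sstrip b t i ⊆ Q2)
    (hfsm : ∀ i, ContDiff ℝ 2 (fv f1 f2 i))
    (hfinj : ∀ i, Set.InjOn (fv f1 f2 i) (Erect l r i))
    (hfim : ∀ i, fv f1 f2 i '' Erect l r i = Sstrip b t i)
    (hJpos : ∀ i, ∀ z ∈ Erect l r i, 0 < Jac f1 f2 i z)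
    (hG1E : ∀ i j, i ≠ j → interior (Erect l r i) ∩ interior (Erect l r j) = ∅)
    (hG1S : ∀ i j, i ≠ j → interior (Sstrip b t i) ∩ interior (Sstrip b t j) = ∅)
    (hG2 : volume (Q2 \ ⋃ i, interior (Erect l r i)) = 0)
    (hG3 : Summable (fun i => deltaMax l r i * Real.log (1 / deltaMin l r i)))
    (hH1 : ∀ i, ∀ z ∈ Erect l r i,
      |Dx (f2 i) z| + α * |Dy (f2 i) z| + α ^ 2 * |Dy (f1 i) z| ≤ α * |Dx (f1 i) z|)
    (hH2 : ∀ i, ∀ z ∈ Erect l r i, K₀ ≤ |Dx (f1 i) z| - α * |Dy (f1 i) z|)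
    (hH3 : ∀ i, ∀ z ∈ Erect l r i,
      |Dy (f1 i) z| + α * |Dy (f2 i) z| + α ^ 2 * |Dx (f2 i) z| ≤ α * |Dx (f1 i) z|)
    (hH4 : ∀ i, ∀ z ∈ Erect l r i, Jac f1 f2 i z * K₀ ≤ |Dx (f1 i) z| - α * |Dx (f2 i) z|)
    (hH5 : 1 / K₀ ^ 2 + α ^ 2 < 1)
    (C₀ : ℝ) (hC₀ : 0 < C₀)
    (hD2 : ∀ i, ∀ z ∈ Erect l r i, D2max f1 f2 i z ≤ C₀ * |Dx (f1 i) z|)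
    (yu : (ℤ → ℕ) → ℝ → ℝ) (zp : (ℤ → ℕ) → ℝ × ℝ)
    (hyu1 : ∀ ω : ℤ → ℕ, ContDiffOn ℝ 1 (yu ω) (Set.Icc (0:ℝ) 1))
    (hyu2 : ∀ ω : ℤ → ℕ, ∀ x ∈ Set.Icc (0:ℝ) 1,
      |derivWithin (yu ω) (Set.Icc (0:ℝ) 1) x| ≤ α)
    (hyu3 : ∀ ω : ℤ → ℕ,
      (⋂ m : ℕ, Sfin l r f1 f2 (fun k => ω (-(k : ℤ) - 1)) (m + 1))
        = (fun x => (x, yu ω x)) '' Set.Icc (0:ℝ) 1)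
    (hzp : ∀ ω : ℤ → ℕ,
      (⋂ m : ℕ, ⋂ n : ℕ,
        Sfin l r f1 f2 (fun k => ω (-(k : ℤ) - 1)) (m + 1) ∩
          Efin l r f1 f2 (fun k => ω (k : ℤ)) (n + 1)) = {zp ω})
    :
    ∃ C : ℝ, 0 < C ∧
      ∀ ω ω' : ℤ → ℕ, ω 0 = ω' 0 →
        |Real.log (DuF f1 yu zp ω) - Real.log (DuF f1 yu zp ω')| ≤ C ∧
        DuF f1 yu zp ω ≤ C * DuF f1 yu zp ω' := by
  have hmemE : ∀ ω : ℤ → ℕ, zp ω ∈ Erect l r (ω 0) := by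
    intro ω
    have h : zp ω ∈ ⋂ m : ℕ, ⋂ n : ℕ,
        Sfin l r f1 f2 (fun k => ω (-(k : ℤ) - 1)) (m + 1) ∩
          Efin l r f1 f2 (fun k => ω (k : ℤ)) (n + 1) := by
      rw [hzp ω]; exact rfl
    have h0 := (Set.mem_iInter.mp (Set.mem_iInter.mp h 0) 0).2
    simp only [Efin] at h0
    simpa using h0.1
  have h1α : 0 < 1 - α ^ 2 := by nlinarith
  set M : ℝ := (1 + α ^ 2) * Real.exp (3 * C₀) / (1 - α ^ 2) with hMdef
  have hMpos : 0 < M := div_pos (mul_pos (by nlinarith) (Real.exp_pos _)) h1α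
  have hAB : ∀ ω : ℤ → ℕ,
      K₀ ≤ |Dx (f1 (ω 0)) (zp ω)| ∧
      (1 - α ^ 2) * |Dx (f1 (ω 0)) (zp ω)| ≤ DuF f1 yu zp ω ∧
      DuF f1 yu zp ω ≤ (1 + α ^ 2) * |Dx (f1 (ω 0)) (zp ω)| := by
    intro ω
    have hzE := hmemE ω
    have h2 := hH2 (ω 0) _ hzE
    have h3 := hH3 (ω 0) _ hzE
    have hx : (zp ω).1 ∈ Set.Icc (0:ℝ) 1 := (hEQ _ hzE).1
    have ha : |uSlope yu zp ω| ≤ α := hyu2 ω _ hx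
    set A := Dx (f1 (ω 0)) (zp ω) with hAdef
    set B := Dy (f1 (ω 0)) (zp ω) with hBdef
    set a := uSlope yu zp ω with hadef
    have hAK : K₀ ≤ |A| := by
      nlinarith [abs_nonneg B, mul_nonneg hα0.le (abs_nonneg B)]
    have hBA : |B| ≤ α * |A| := by
      nlinarith [abs_nonneg (Dy (f2 (ω 0)) (zp ω)), abs_nonneg (Dx (f2 (ω 0)) (zp ω)),
        mul_nonneg hα0.le (abs_nonneg (Dy (f2 (ω 0)) (zp ω))),
        mul_nonneg (mul_nonneg hα0.le hα0.le) (abs_nonneg (Dx (f2 (ω 0)) (zp ω)))]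
    have haB : |a * B| ≤ α ^ 2 * |A| := by
      rw [abs_mul]
      calc |a| * |B| ≤ α * (α * |A|) := mul_le_mul ha hBA (abs_nonneg _) hα0.le
        _ = α ^ 2 * |A| := by ring
    have hDuF : DuF f1 yu zp ω = |A + a * B| := rfl
    refine ⟨hAK, ?_, ?_⟩
    · rw [hDuF]
      have t := abs_add_le (A + a * B) (-(a * B))
      simp only [add_neg_cancel_right, abs_neg] at t
      linarith [t, haB]
    · rw [hDuF]
      linarith [abs_add_le A (a * B), haB]
  have hDpos : ∀ ω : ℤ → ℕ, 0 < DuF f1 yu zp ω := by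
    intro ω
    obtain ⟨hAK, hlow, _⟩ := hAB ω
    nlinarith
  have key : ∀ ω ω' : ℤ → ℕ, ω 0 = ω' 0 → DuF f1 yu zp ω ≤ M * DuF f1 yu zp ω' := by
    intro ω ω' h
    obtain ⟨hAK, hlow, hup⟩ := hAB ω
    obtain ⟨hAK', hlow', hup'⟩ := hAB ω'
    have hz'E : zp ω' ∈ Erect l r (ω 0) := by rw [h]; exact hmemE ω'
    have hlog := dist_log_Dx α K₀ C₀ hα0 hα1 hK hC₀ l r f1 f2 (ω 0)
      (hl _) (hr _) (hl' _) (hr' _) (hlr _) (hEQ _) (hfsm _) (hH2 _) (hD2 _)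
      (hmemE ω) hz'E
    rw [← h] at hAK' hlow' hup'
    have hApos : 0 < |Dx (f1 (ω 0)) (zp ω)| := lt_of_lt_of_le (by linarith) hAK
    have hA'pos : 0 < |Dx (f1 (ω 0)) (zp ω')| := lt_of_lt_of_le (by linarith) hAK'
    have habs : |Dx (f1 (ω 0)) (zp ω)| ≤ Real.exp (3 * C₀) * |Dx (f1 (ω 0)) (zp ω')| := by
      have h1 : Real.log |Dx (f1 (ω 0)) (zp ω)|
          ≤ Real.log (Real.exp (3 * C₀) * |Dx (f1 (ω 0)) (zp ω')|) := by
        rw [Real.log_mul (Real.exp_ne_zero _) (ne_of_gt hA'pos), Real.log_exp]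
        linarith [hlog]
      calc |Dx (f1 (ω 0)) (zp ω)|
          = Real.exp (Real.log |Dx (f1 (ω 0)) (zp ω)|) := (Real.exp_log hApos).symm
        _ ≤ Real.exp (Real.log (Real.exp (3 * C₀) * |Dx (f1 (ω 0)) (zp ω')|)) :=
            Real.exp_le_exp.mpr h1
        _ = Real.exp (3 * C₀) * |Dx (f1 (ω 0)) (zp ω')| :=
            Real.exp_log (mul_pos (Real.exp_pos _) hA'pos)
    have hM1 : M * (1 - α ^ 2) = (1 + α ^ 2) * Real.exp (3 * C₀) := by
      rw [hMdef]; field_simp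
    have hM2 : M * (1 - α ^ 2) * |Dx (f1 (ω 0)) (zp ω')|
        = (1 + α ^ 2) * Real.exp (3 * C₀) * |Dx (f1 (ω 0)) (zp ω')| := by rw [hM1]
    have hint1 := mul_le_mul_of_nonneg_left hlow' hMpos.le
    have hint2 := mul_le_mul_of_nonneg_left habs (by nlinarith : (0:ℝ) ≤ 1 + α ^ 2)
    nlinarith [hint1, hint2, hM2, hup]
  refine ⟨M, hMpos, fun ω ω' h => ?_⟩
  have k1 := key ω ω' h
  have k2 := key ω' ω h.symm
  have p1 : 0 < DuF f1 yu zp ω := hDpos ω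
  have p2 : 0 < DuF f1 yu zp ω' := hDpos ω'
  have hlM : Real.log M ≤ M := by linarith [Real.log_le_sub_one_of_pos hMpos]
  have hlog1 : Real.log (DuF f1 yu zp ω) - Real.log (DuF f1 yu zp ω') ≤ M := by
    have := (Real.log_le_log_iff p1 (mul_pos hMpos p2)).mpr k1
    rw [Real.log_mul hMpos.ne' p2.ne'] at this
    linarith
  have hlog2 : Real.log (DuF f1 yu zp ω') - Real.log (DuF f1 yu zp ω) ≤ M := by
    have := (Real.log_le_log_iff p2 (mul_pos hMpos p1)).mpr k2
    rw [Real.log_mul hMpos.ne' p1.ne'] at this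
    linarith
  exact ⟨abs_sub_le_iff.mpr ⟨hlog1, hlog2⟩, k1⟩
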